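/- Let (M, d) be a metric space, f : M → ℝ uniformly continuous, and let ω : [0,∞) → [0,∞) be nondecreasing, continuous at 0 with ω(0) = 0, subadditive (ω(t+u) ≤ ω(t) + ω(u)), and satisfy |f(x) − f(y)| ≤ ω(d(x,y)) for all x, y ∈ M. Then for any ε, a > 0 with ω(a) ≤ ε there exists an (ε/a)-Lipschitz function g : M → ℝ with sup_{x ∈ M} |f(x) − g(x)| ≤ ε. -/

import Mathlib

/-- Lemma 2.3 of the paper: approximation of a uniformly continuous function
with subadditive modulus `ω` by an `(ε/a)`-Lipschitz function. -/
theorem stmt6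
    (M : Type*) [MetricSpace M] (f : M → ℝ) (hf : UniformContinuous f)
    (ω : ℝ → ℝ)
    (hωnonneg : ∀ t, 0 ≤ t → 0 ≤ ω t)
    (hωmono : ∀ t u, 0 ≤ t → t ≤ u → ω t ≤ ω u)
    (hω0 : ω 0 = 0)
    (hωcont : ContinuousWithinAt ω (Set.Ici 0) 0)
    (hωsub : ∀ t u, 0 ≤ t → 0 ≤ u → ω (t + u) ≤ ω t + ω u)
    (hdom : ∀ x y : M, |f x - f y| ≤ ω (dist x y))
    (ε a : ℝ) (hε : 0 < ε) (ha : 0 < a) (hωa : ω a ≤ ε) :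
    ∃ g : M → ℝ, LipschitzWith (Real.toNNReal (ε / a)) g ∧ ∀ x, |f x - g x| ≤ ε := by
  set K := ε / a with hKdef
  have hK : 0 ≤ K := by positivity
  -- ω (n * a) ≤ n * ω a
  have key : ∀ n : ℕ, ω (n * a) ≤ n * ω a := by
    intro n
    induction n with
    | zero => simp [hω0]
    | succ n ih =>
      push_cast
      rw [add_mul, one_mul]
      calc ω (n * a + a) ≤ ω (n * a) + ω a :=
            hωsub _ _ (by positivity) ha.le
        _ ≤ n * ω a + ω a := by linarith
        _ = (n + 1) * ω a := by ring
  -- linear bound on ω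
  have bound : ∀ t, 0 ≤ t → ω t ≤ K * t + ε := by
    intro t ht
    set n := ⌈t / a⌉₊ with hn
    have htn : t ≤ n * a := by
      rw [← div_le_iff₀ ha]
      exact Nat.le_ceil _
    have hna : (n : ℝ) ≤ t / a + 1 := by
      have := Nat.ceil_lt_add_one (a := t / a) (by positivity)
      linarith
    calc ω t ≤ ω (n * a) := hωmono _ _ ht htn
      _ ≤ n * ω a := key n
      _ ≤ n * ε := mul_le_mul_of_nonneg_left hωa (Nat.cast_nonneg _)
      _ ≤ (t / a + 1) * ε := mul_le_mul_of_nonneg_right hna hε.le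
      _ = K * t + ε := by
          rw [hKdef]; field_simp
  have hlb : ∀ x y : M, f x - ε ≤ f y + K * dist x y := by
    intro x y
    have h1 : f x - f y ≤ ω (dist x y) := (abs_le.1 (hdom x y)).2
    have h2 := bound (dist x y) dist_nonneg
    linarith
  set g : M → ℝ := fun x => ⨅ y, f y + K * dist x y with hg
  have hbdd : ∀ x : M, BddBelow (Set.range fun y => f y + K * dist x y) := by
    intro x
    exact ⟨f x - ε, by rintro _ ⟨y, rfl⟩; exact hlb x y⟩
  have hgle : ∀ x : M, g x ≤ f x := by
    intro x
    have := ciInf_le (hbdd x) x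
    simpa using this
  have hgge : ∀ x : M, f x - ε ≤ g x := by
    intro x
    haveI : Nonempty M := ⟨x⟩
    exact le_ciInf (fun y => hlb x y)
  have hlip : ∀ x x' : M, g x ≤ g x' + K * dist x x' := by
    intro x x'
    haveI : Nonempty M := ⟨x⟩
    rw [← sub_le_iff_le_add]
    apply le_ciInf
    intro y
    have h1 : g x ≤ f y + K * dist x y := ciInf_le (hbdd x) y
    have h2 : dist x y ≤ dist x x' + dist x' y := dist_triangle x x' y
    have h3 : K * dist x y ≤ K * (dist x x' + dist x' y) :=
      mul_le_mul_of_nonneg_left h2 hK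
    linarith [mul_add K (dist x x') (dist x' y)] <;> nlinarith
  refine ⟨g, ?_, ?_⟩
  · apply LipschitzWith.of_dist_le_mul
    intro x x'
    rw [Real.dist_eq, Real.coe_toNNReal _ hK]
    rw [abs_sub_le_iff]
    constructor
    · have := hlip x x'; linarith
    · have := hlip x' x
      rw [dist_comm x' x] at this
      linarith
  · intro x
    rw [abs_le]
    constructor
    · linarith [hgle x]
    · linarith [hgge x]
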